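/- For k a nonnegative integer, the potential V(x) = x² + (k(k+1)/2)·((2k−1)/x⁴ + k(k+1)/(2x⁶)) admits ψ_k(x) = x^{k+1}·exp(−x²/2 − k(k+1)/(4x²)) as a solution of −ψ'' + Vψ = Eψ on (0,∞) with E_k = 2k+3, for the case k = 1 (so V(x) = x² + 1/x⁴ + 1/x⁶, ψ₁(x) = x²·exp(−x²/2 − 1/(2x²)), E₁ = 5). -/

import Mathlib

open Real

private lemma inner_deriv (x : ℝ) (hx : x ≠ 0) :
    HasDerivAt (fun y : ℝ => -y ^ 2 / 2 - 1 / (2 * y ^ 2)) (-x + 1 / x ^ 3) x := by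
  have h1 : HasDerivAt (fun y : ℝ => y ^ 2) (2 * x) x := by
    simpa using hasDerivAt_pow 2 x
  have h2 : HasDerivAt (fun y : ℝ => 2 * y ^ 2) (2 * (2 * x)) x := h1.const_mul 2
  have hne : 2 * x ^ 2 ≠ 0 := by positivity
  have h3 : HasDerivAt (fun y : ℝ => (2 * y ^ 2)⁻¹) (-(2 * (2 * x)) / (2 * x ^ 2) ^ 2) x :=
    h2.inv hne
  have h4 := (h1.neg.div_const 2).sub h3
  have : (fun y : ℝ => -y ^ 2 / 2 - 1 / (2 * y ^ 2))
      = fun y : ℝ => -y ^ 2 / 2 - (2 * y ^ 2)⁻¹ := by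
    funext y; rw [one_div]
  rw [this]
  refine h4.congr_deriv ?_
  field_simp
  ring

private lemma psi_deriv (x : ℝ) (hx : x ≠ 0) :
    HasDerivAt (fun y : ℝ => y ^ 2 * Real.exp (-y ^ 2 / 2 - 1 / (2 * y ^ 2)))
      ((2 * x - x ^ 3 + 1 / x) * Real.exp (-x ^ 2 / 2 - 1 / (2 * x ^ 2))) x := by
  have h1 : HasDerivAt (fun y : ℝ => y ^ 2) (2 * x) x := by
    simpa using hasDerivAt_pow 2 x
  have h2 := (inner_deriv x hx).exp
  have h3 := h1.mul h2
  refine h3.congr_deriv ?_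
  field_simp
  ring

private lemma psi_deriv2 (x : ℝ) (hx : x ≠ 0) :
    HasDerivAt (fun y : ℝ => (2 * y - y ^ 3 + 1 / y) * Real.exp (-y ^ 2 / 2 - 1 / (2 * y ^ 2)))
      ((x ^ 4 - 5 * x ^ 2 + 1 / x ^ 2 + 1 / x ^ 4) *
        Real.exp (-x ^ 2 / 2 - 1 / (2 * x ^ 2))) x := by
  have ha : HasDerivAt (fun y : ℝ => 2 * y - y ^ 3 + 1 / y)
      (2 - 3 * x ^ 2 - 1 / x ^ 2) x := by
    have h1 : HasDerivAt (fun y : ℝ => 2 * y) 2 x := by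
      simpa using (hasDerivAt_id x).const_mul 2
    have h2 : HasDerivAt (fun y : ℝ => y ^ 3) (3 * x ^ 2) x := by
      simpa using hasDerivAt_pow 3 x
    have h3 : HasDerivAt (fun y : ℝ => y⁻¹) (-(x ^ 2)⁻¹) x := by
      simpa using hasDerivAt_inv hx
    have := (h1.sub h2).add h3
    have heq : (fun y : ℝ => 2 * y - y ^ 3 + 1 / y)
        = fun y : ℝ => 2 * y - y ^ 3 + y⁻¹ := by
      funext y; rw [one_div]
    rw [heq]
    refine this.congr_deriv ?_
    field_simp
    ring
  have h2 := (inner_deriv x hx).exp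
  have h3 := ha.mul h2
  refine h3.congr_deriv ?_
  field_simp
  ring

theorem exact_eigenfunction_k_one
    (V : ℝ → ℝ) (hV : ∀ x : ℝ, V x = x ^ 2 + 1 / x ^ 4 + 1 / x ^ 6)
    (ψ : ℝ → ℝ)
    (hψ : ∀ x : ℝ, ψ x = x ^ 2 * Real.exp (-x ^ 2 / 2 - 1 / (2 * x ^ 2))) :
    ∀ x : ℝ, 0 < x → -(deriv (deriv ψ) x) + V x * ψ x = 5 * ψ x := by
  intro x hx
  have hxne : x ≠ 0 := ne_of_gt hx
  have hψfun : ψ = fun y : ℝ => y ^ 2 * Real.exp (-y ^ 2 / 2 - 1 / (2 * y ^ 2)) :=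
    funext hψ
  -- deriv ψ agrees with g on the complement of {0}
  set g : ℝ → ℝ := fun y => (2 * y - y ^ 3 + 1 / y) * Real.exp (-y ^ 2 / 2 - 1 / (2 * y ^ 2))
    with hg
  have hev : deriv ψ =ᶠ[nhds x] g := by
    have hopen : IsOpen {y : ℝ | y ≠ 0} := isOpen_ne
    filter_upwards [hopen.mem_nhds hxne] with y hy
    rw [hψfun]
    exact (psi_deriv y hy).deriv
  have hd2 : deriv (deriv ψ) x = deriv g x := hev.deriv_eq
  have hgd : deriv g x = (x ^ 4 - 5 * x ^ 2 + 1 / x ^ 2 + 1 / x ^ 4) *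
      Real.exp (-x ^ 2 / 2 - 1 / (2 * x ^ 2)) := (psi_deriv2 x hxne).deriv
  rw [hd2, hgd, hV, hψ]
  have hE := Real.exp_pos (-x ^ 2 / 2 - 1 / (2 * x ^ 2))
  field_simp
  ring
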